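/- tr(T) = tr(f_{m−1} ∘ f_{m−2} ∘ ⋯ ∘ f_0). -/

import Mathlib

open scoped TensorProduct
open PiTensorProduct
open Module


noncomputable section Aux

variable {K : Type*} [Field K] {V : Type*} [AddCommGroup V] [Module K V]
variable {ι : Type*}

/-- Splitting `Fin (n+1)` as `Fin 1 ⊕ Fin n`. -/
def finSplitAux (n : ℕ) : Fin (n + 1) ≃ (Fin 1 ⊕ Fin n) where
  toFun := Fin.cases (Sum.inl 0) (fun i => Sum.inr i)
  invFun := Sum.elim (fun _ => 0) Fin.succ
  left_inv i := by cases i using Fin.cases <;> simp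
  right_inv x := by
    rcases x with x | x
    · simp [Subsingleton.elim x 0]
    · simp

def splitEquivAux (n : ℕ) :
    (⨂[K] (_ : Fin (n + 1)), V) ≃ₗ[K] V ⊗[K] (⨂[K] (_ : Fin n), V) :=
  (reindex K (fun _ : Fin (n + 1) => V) (finSplitAux n)).trans
    ((tmulEquiv K V).symm.trans
      (TensorProduct.congr (subsingletonEquiv (0 : Fin 1)) (LinearEquiv.refl K _)))

lemma splitEquivAux_tprod (n : ℕ) (v : Fin (n + 1) → V) :
    splitEquivAux n (⨂ₜ[K] i, v i) = v 0 ⊗ₜ[K] (⨂ₜ[K] i, v i.succ) := by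
  simp only [splitEquivAux, LinearEquiv.trans_apply, reindex_tprod]
  rw [show (⨂ₜ[K] (i : Fin 1 ⊕ Fin n), v ((finSplitAux n).symm i)) =
      ⨂ₜ[K] (i : Fin 1 ⊕ Fin n), Sum.elim (fun _ : Fin 1 => v 0)
        (fun j : Fin n => v j.succ) i from by
    congr 1; funext i; rcases i with i | i <;> rfl]
  rw [tmulEquiv_symm_apply]
  simp [finSplitAux]

def tpBasisAux (b : Basis ι K V) : (n : ℕ) → Basis (Fin n → ι) K (⨂[K] (_ : Fin n), V)
  | 0 => (Basis.singleton (Fin 0 → ι) K).map (isEmptyEquiv (Fin 0)).symm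
  | n + 1 =>
      ((b.tensorProduct (tpBasisAux b n)).reindex
        (Fin.consEquiv (fun _ : Fin (n + 1) => ι))).map (splitEquivAux n).symm

theorem tpBasisAux_repr_tprod (b : Basis ι K V) :
    ∀ (n : ℕ) (v : Fin n → V) (κ : Fin n → ι),
      (tpBasisAux b n).repr (⨂ₜ[K] i, v i) κ = ∏ i, b.repr (v i) (κ i)
  | 0, v, κ => by
    simp [tpBasisAux, Basis.map_repr, Basis.singleton_repr]
  | n + 1, v, κ => by
    have hE : (Fin.consEquiv (fun _ : Fin (n + 1) => ι)).symm κ =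
        (κ 0, fun i => κ i.succ) := by
      rw [Equiv.symm_apply_eq]
      exact (Fin.cons_self_tail κ).symm
    rw [tpBasisAux]
    rw [Basis.map_repr]
    simp only [LinearEquiv.trans_apply, LinearEquiv.symm_symm]
    rw [splitEquivAux_tprod]
    rw [Basis.repr_reindex_apply, hE, Basis.tensorProduct_repr_tmul_apply,
      tpBasisAux_repr_tprod b n]
    rw [Fin.prod_univ_succ]
    simp [mul_comm]

theorem tpBasisAux_apply (b : Basis ι K V) [DecidableEq ι] (n : ℕ) (κ : Fin n → ι) :
    tpBasisAux b n κ = ⨂ₜ[K] i, b (κ i) := by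
  apply (tpBasisAux b n).repr.injective
  ext κ'
  rw [Basis.repr_self, tpBasisAux_repr_tprod]
  symm
  by_cases h : κ = κ'
  · subst h
    rw [Finsupp.single_eq_same]
    refine Finset.prod_eq_one fun i _ => ?_
    rw [Basis.repr_self, Finsupp.single_eq_same]
  · rw [Finsupp.single_apply, if_neg h]
    obtain ⟨i, hi⟩ : ∃ i, κ i ≠ κ' i := by
      by_contra hc; push_neg at hc; exact h (funext hc)
    exact Finset.prod_eq_zero (Finset.mem_univ i)
      (by simp [Basis.repr_self, Finsupp.single_apply, hi])

end Aux


section Mat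

variable {α : Type*} [Fintype α] [DecidableEq α] {K : Type*} [CommRing K]

theorem pathLemmaAux : ∀ (n : ℕ) (N : Fin n → Matrix α α K) (a b : α),
    (((List.finRange n).reverse.map N).prod) a b
      = ∑ q : Fin (n + 1) → α,
          if q 0 = b ∧ q (Fin.last n) = a then
            ∏ j : Fin n, N j (q j.succ) (q j.castSucc) else 0
  | 0, N, a, b => by
    simp only [List.finRange_zero, List.reverse_nil, List.map_nil, List.prod_nil,
      Matrix.one_apply]
    rw [Fintype.sum_equiv (Equiv.funUnique (Fin 1) α)
      (fun q : Fin 1 → α => if q 0 = b ∧ q (Fin.last 0) = a then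
        ∏ j : Fin 0, N j (q j.succ) (q j.castSucc) else 0)
      (fun c : α => if c = b ∧ c = a then (1 : K) else 0)
      (fun q => by
        simp only [Finset.univ_eq_empty, Finset.prod_empty, Equiv.funUnique_apply]
        rfl)]
    simp_rw [ite_and]
    rw [Finset.sum_ite_eq' Finset.univ b (fun c => if c = a then (1 : K) else 0)]
    simp [eq_comm]
  | n + 1, N, a, b => by
    have hL : ((List.finRange (n + 1)).reverse.map N).prod
        = (((List.finRange n).reverse.map (N ∘ Fin.succ)).prod) * N 0 := by
      rw [List.finRange_succ, List.reverse_cons, List.map_append,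
        List.prod_append, ← List.map_reverse, List.map_map]
      simp
    rw [hL, Matrix.mul_apply]
    simp_rw [pathLemmaAux n (N ∘ Fin.succ) a, Finset.sum_mul, ite_mul, zero_mul]
    rw [Finset.sum_comm]
    have key : ∀ q' : Fin (n + 1) → α,
        (∑ x : α, if q' 0 = x ∧ q' (Fin.last n) = a then
            (∏ j : Fin n, (N ∘ Fin.succ) j (q' j.succ) (q' j.castSucc)) * N 0 x b else 0)
          = if q' (Fin.last n) = a then
              (∏ j : Fin n, (N ∘ Fin.succ) j (q' j.succ) (q' j.castSucc)) * N 0 (q' 0) b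
            else 0 := by
      intro q'
      simp_rw [ite_and]
      rw [Finset.sum_ite_eq Finset.univ (q' 0) (fun x => if q' (Fin.last n) = a then
        (∏ j : Fin n, (N ∘ Fin.succ) j (q' j.succ) (q' j.castSucc)) * N 0 x b else 0)]
      simp
    simp_rw [key]
    have hcons : ∀ p : α × (Fin (n + 1) → α),
        (if p.1 = b ∧ p.2 (Fin.last n) = a then
            N 0 (p.2 0) p.1 * ∏ j : Fin n, (N ∘ Fin.succ) j (p.2 j.succ) (p.2 j.castSucc)
          else 0)
          = (fun q : Fin (n + 2) → α => if q 0 = b ∧ q (Fin.last (n + 1)) = a then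
              ∏ j : Fin (n + 1), N j (q j.succ) (q j.castSucc) else 0)
            ((Fin.consEquiv (fun _ : Fin (n + 2) => α)) p) := by
      rintro ⟨c, q'⟩
      simp only [Fin.consEquiv_apply, Fin.cons_zero]
      have h1 : (Fin.cons c q' : Fin (n + 2) → α) (Fin.last (n + 1)) = q' (Fin.last n) := by
        rw [← Fin.succ_last, Fin.cons_succ]
      rw [h1, Fin.prod_univ_succ]
      by_cases hc : c = b ∧ q' (Fin.last n) = a
      · rw [if_pos hc, if_pos hc]
        have h4 : (Fin.cons c q' : Fin (n + 2) → α) ((0 : Fin (n + 1)).succ) = q' 0 := Fin.cons_succ _ _ _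
        have h5 : (Fin.cons c q' : Fin (n + 2) → α) ((0 : Fin (n + 1)).castSucc) = c := by
          rw [Fin.castSucc_zero, Fin.cons_zero]
        have h2 : ∀ j : Fin n, (Fin.cons c q' : Fin (n + 2) → α) (j.succ.succ) = q' j.succ :=
          fun j => Fin.cons_succ _ _ _
        have h3 : ∀ j : Fin n, (Fin.cons c q' : Fin (n + 2) → α) (j.succ.castSucc) = q' j.castSucc :=
          fun j => by rw [← Fin.succ_castSucc, Fin.cons_succ]
        rw [h4, h5]
        simp only [h2, h3]
        rfl
      · rw [if_neg hc, if_neg hc]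
    rw [← Fintype.sum_equiv (Fin.consEquiv (fun _ : Fin (n + 2) => α))
      (fun p : α × (Fin (n + 1) → α) =>
        if p.1 = b ∧ p.2 (Fin.last n) = a then
          N 0 (p.2 0) p.1 * ∏ j : Fin n, (N ∘ Fin.succ) j (p.2 j.succ) (p.2 j.castSucc)
        else 0)
      _ hcons]
    rw [Fintype.sum_prod_type, Finset.sum_comm]
    refine Finset.sum_congr rfl fun q' _ => ?_
    simp_rw [ite_and]
    rw [Finset.sum_ite_eq' Finset.univ b (fun c => if q' (Fin.last n) = a then
      N 0 (q' 0) c * ∏ j : Fin n, (N ∘ Fin.succ) j (q' j.succ) (q' j.castSucc) else 0)]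
    by_cases h : q' (Fin.last n) = a
    · simp [h, mul_comm]
    · simp [h]

end Mat

section Mat2

variable {α : Type*} [Fintype α] [DecidableEq α] {K : Type*} [CommRing K]

theorem cycLemmaAux (n : ℕ) (N : Fin (n + 1) → Matrix α α K) :
    ∑ σ : Fin (n + 1) → α, ∏ j : Fin (n + 1),
        N j (σ ⟨(j.1 + 1) % (n + 1), Nat.mod_lt _ n.succ_pos⟩) (σ j)
      = Matrix.trace (((List.finRange (n + 1)).reverse.map N).prod) := by
  rw [Matrix.trace]
  simp_rw [Matrix.diag_apply, pathLemmaAux (n + 1) N]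
  rw [Finset.sum_comm]
  have collapse : ∀ q : Fin (n + 2) → α,
      (∑ a : α, if q 0 = a ∧ q (Fin.last (n + 1)) = a then
          ∏ j : Fin (n + 1), N j (q j.succ) (q j.castSucc) else 0)
        = if q (Fin.last (n + 1)) = q 0 then
            ∏ j : Fin (n + 1), N j (q j.succ) (q j.castSucc) else 0 := by
    intro q
    simp_rw [ite_and]
    rw [Finset.sum_ite_eq Finset.univ (q 0) (fun a => if q (Fin.last (n + 1)) = a then
      ∏ j : Fin (n + 1), N j (q j.succ) (q j.castSucc) else 0)]
    simp
  simp_rw [collapse]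
  have hsnoc : ∀ p : α × (Fin (n + 1) → α),
      (if p.1 = p.2 0 then
          ∏ j : Fin (n + 1), N j ((Fin.snoc p.2 p.1 : Fin (n + 2) → α) j.succ)
            ((Fin.snoc p.2 p.1 : Fin (n + 2) → α) j.castSucc) else 0)
        = (fun q : Fin (n + 2) → α => if q (Fin.last (n + 1)) = q 0 then
            ∏ j : Fin (n + 1), N j (q j.succ) (q j.castSucc) else 0)
          ((Fin.snocEquiv (fun _ : Fin (n + 2) => α)) p) := by
    rintro ⟨c, σ⟩
    simp only [Fin.snocEquiv_apply]
    have hlast : (Fin.snoc σ c : Fin (n + 2) → α) (Fin.last (n + 1)) = c := Fin.snoc_last _ _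
    have h0 : (Fin.snoc σ c : Fin (n + 2) → α) 0 = σ 0 := by
      rw [show (0 : Fin (n + 2)) = (0 : Fin (n + 1)).castSucc by rfl, Fin.snoc_castSucc]
    rw [hlast, h0]
  rw [← Fintype.sum_equiv (Fin.snocEquiv (fun _ : Fin (n + 2) => α)) _ _ hsnoc]
  rw [Fintype.sum_prod_type, Finset.sum_comm]
  refine Finset.sum_congr rfl fun σ _ => ?_
  rw [Finset.sum_ite_eq' Finset.univ (σ 0) (fun c =>
    ∏ j : Fin (n + 1), N j ((Fin.snoc σ c : Fin (n + 2) → α) j.succ)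
      ((Fin.snoc σ c : Fin (n + 2) → α) j.castSucc))]
  simp only [Finset.mem_univ, if_true]
  refine Finset.prod_congr rfl fun j _ => ?_
  have hcs : (Fin.snoc σ (σ 0) : Fin (n + 2) → α) j.castSucc = σ j := Fin.snoc_castSucc _ _ _
  have hsucc : (Fin.snoc σ (σ 0) : Fin (n + 2) → α) j.succ
      = σ ⟨(j.1 + 1) % (n + 1), Nat.mod_lt _ n.succ_pos⟩ := by
    refine Fin.lastCases ?_ (fun i => ?_) j
    · rw [Fin.succ_last, Fin.snoc_last]
      congr 1
      ext
      simp [Nat.mod_self]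
    · rw [Fin.succ_castSucc, Fin.snoc_castSucc]
      congr 1
      ext
      simp [Fin.val_succ, Nat.mod_eq_of_lt (Nat.succ_lt_succ i.isLt)]
  rw [hcs, hsucc]

end Mat2


noncomputable section ZAux

open scoped TensorProduct
open PiTensorProduct

variable {K : Type*} [Field K] {V : Type*} [AddCommGroup V] [Module K V]
variable {ι : Type*}

def zmodFinEquiv (n : ℕ) : Fin (n + 1) ≃ ZMod (n + 1) where
  toFun i := (i.1 : ZMod (n + 1))
  invFun x := ⟨x.val, ZMod.val_lt x⟩
  left_inv i := Fin.ext (ZMod.val_cast_of_lt i.2)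
  right_inv x := ZMod.natCast_rightInverse x

def zmodBasisAux (b : Basis ι K V) (n : ℕ) :
    Basis (ZMod (n + 1) → ι) K (⨂[K] (_ : ZMod (n + 1)), V) :=
  ((tpBasisAux b (n + 1)).map
      (PiTensorProduct.reindex K (fun _ : Fin (n + 1) => V) (zmodFinEquiv n))).reindex
    (Equiv.arrowCongr (zmodFinEquiv n) (Equiv.refl ι))

lemma zmodBasisAux_apply (b : Basis ι K V) [DecidableEq ι] (n : ℕ)
    (κ : ZMod (n + 1) → ι) :
    zmodBasisAux b n κ = ⨂ₜ[K] i, b (κ i) := by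
  rw [zmodBasisAux, Basis.reindex_apply, Basis.map_apply, tpBasisAux_apply,
    PiTensorProduct.reindex_tprod]
  congr 1
  funext i
  simp [Equiv.arrowCongr]

lemma zmodBasisAux_repr (b : Basis ι K V) (n : ℕ) (v : ZMod (n + 1) → V)
    (κ : ZMod (n + 1) → ι) :
    (zmodBasisAux b n).repr (⨂ₜ[K] i, v i) κ = ∏ i, b.repr (v i) (κ i) := by
  rw [zmodBasisAux, Basis.repr_reindex_apply, Basis.map_repr, LinearEquiv.trans_apply,
    PiTensorProduct.reindex_symm, PiTensorProduct.reindex_tprod, tpBasisAux_repr_tprod]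
  refine Fintype.prod_equiv (zmodFinEquiv n) _ _ fun j => ?_
  simp [Equiv.arrowCongr]

end ZAux

noncomputable section MainAux

open scoped TensorProduct
open PiTensorProduct

variable {K : Type*} [Field K] {V : Type*} [AddCommGroup V] [Module K V]
variable {ι : Type*} [Fintype ι] [DecidableEq ι]

lemma coeM_list_map_fix {β : Type*} (m : ℕ) (g : ZMod m → β) (l : List ℕ) :
    (l.map fun i => g (i : ZMod m)) = l.map (fun i : ℕ => g ((i : ℕ) : ZMod m)) := by
  induction l with
  | nil => rfl
  | cons a l ih => simpa using ih

theorem twisted_cyclic_aux (n : ℕ) (b : Basis ι K V)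
    (f : ZMod (n + 1) → Module.End K V)
    (T : Module.End K (⨂[K] (_i : ZMod (n + 1)), V))
    (hT : ∀ v : ZMod (n + 1) → V,
      T (⨂ₜ[K] i, v i) = ⨂ₜ[K] i, f (i - 1) (v (i - 1))) :
    LinearMap.trace K (⨂[K] (_i : ZMod (n + 1)), V) T =
      LinearMap.trace K V
        (((List.range (n + 1)).reverse.map fun i => f (i : ZMod (n + 1))).prod) := by
  classical
  rw [coeM_list_map_fix]
  set Mt : ZMod (n + 1) → Matrix ι ι K := fun j => LinearMap.toMatrix b b (f j) with hMt
  set N : Fin (n + 1) → Matrix ι ι K := fun j => Mt (zmodFinEquiv n j) with hN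
  rw [LinearMap.trace_eq_matrix_trace K (zmodBasisAux b n) T, Matrix.trace]
  have hdiag : ∀ κ : ZMod (n + 1) → ι,
      (LinearMap.toMatrix (zmodBasisAux b n) (zmodBasisAux b n) T).diag κ
        = ∏ i : ZMod (n + 1), Mt (i - 1) (κ i) (κ (i - 1)) := by
    intro κ
    rw [Matrix.diag_apply, LinearMap.toMatrix_apply, zmodBasisAux_apply, hT,
      zmodBasisAux_repr]
    exact Finset.prod_congr rfl fun i _ =>
      (LinearMap.toMatrix_apply b b (f (i - 1)) (κ i) (κ (i - 1))).symm
  simp_rw [hdiag]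
  have hshift : ∀ κ : ZMod (n + 1) → ι,
      (∏ i : ZMod (n + 1), Mt (i - 1) (κ i) (κ (i - 1)))
        = ∏ j : ZMod (n + 1), Mt j (κ (j + 1)) (κ j) := by
    intro κ
    exact (Fintype.prod_equiv (Equiv.addRight (1 : ZMod (n + 1)))
      (fun j => Mt j (κ (j + 1)) (κ j))
      (fun i => Mt (i - 1) (κ i) (κ (i - 1)))
      (fun j => by simp)).symm
  simp_rw [hshift]
  have htoFin :
      (∑ κ : ZMod (n + 1) → ι, ∏ j : ZMod (n + 1), Mt j (κ (j + 1)) (κ j))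
        = ∑ σ : Fin (n + 1) → ι, ∏ j : Fin (n + 1),
            N j (σ ⟨(j.1 + 1) % (n + 1), Nat.mod_lt _ n.succ_pos⟩) (σ j) := by
    refine Fintype.sum_equiv (Equiv.arrowCongr (zmodFinEquiv n) (Equiv.refl ι)).symm _ _
      fun κ => ?_
    refine (Fintype.prod_equiv (zmodFinEquiv n) _ _ fun j => ?_).symm
    have h1 : zmodFinEquiv n ⟨(j.1 + 1) % (n + 1), Nat.mod_lt _ n.succ_pos⟩
        = zmodFinEquiv n j + 1 := by
      show (((j.1 + 1) % (n + 1) : ℕ) : ZMod (n + 1)) = ((j.1 : ℕ) : ZMod (n + 1)) + 1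
      rw [ZMod.natCast_mod, Nat.cast_add, Nat.cast_one]
    simp only [hN, Equiv.arrowCongr, Equiv.coe_fn_symm_mk, Equiv.coe_refl,
      Function.comp_apply, id_eq, Equiv.symm_symm, Equiv.refl_symm, Equiv.refl_apply]
    rw [h1]
  rw [htoFin, cycLemmaAux n N, LinearMap.trace_eq_matrix_trace K b]
  congr 1
  have hlist : ∀ L : List (Module.End K V),
      LinearMap.toMatrix b b L.prod = (L.map fun g => LinearMap.toMatrix b b g).prod := by
    intro L
    induction L with
    | nil => simpa using LinearMap.toMatrix_one b
    | cons g L ih => rw [List.prod_cons, List.map_cons, List.prod_cons, ← ih,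
        LinearMap.toMatrix_mul]
  rw [hlist]
  have : ((List.range (n + 1)).reverse.map fun i : ℕ => f ((i : ℕ) : ZMod (n + 1))).map
      (fun g => LinearMap.toMatrix b b g) = (List.finRange (n + 1)).reverse.map N := by
    rw [← (show (List.finRange (n + 1)).map (fun i : Fin (n + 1) => (i : ℕ)) = List.range (n + 1) from
      List.ext_getElem (by simp) (by simp)), ← List.map_reverse, List.map_map, List.map_map]
    rfl
  rw [this]

end MainAux

open scoped TensorProduct

/-- Let `V` be a finite-dimensional vector space over a field `K`, `m ≥ 1`, and
`f_0, …, f_{m−1} ∈ End_K(V)`.  Let `T` be the twisted cyclic rotation of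
`V^{⊗m}` determined on elementary tensors by
`T(v_0 ⊗ ⋯ ⊗ v_{m−1}) = f_{m−1}(v_{m−1}) ⊗ f_0(v_0) ⊗ ⋯ ⊗ f_{m−2}(v_{m−2})`.
Then `tr(T) = tr(f_{m−1} ∘ f_{m−2} ∘ ⋯ ∘ f_0)`. -/
theorem trace_twisted_cyclic_rotation
    (K : Type*) [Field K] (V : Type*) [AddCommGroup V] [Module K V]
    [FiniteDimensional K V] (m : ℕ) [NeZero m]
    (f : ZMod m → Module.End K V)
    (T : Module.End K (⨂[K] (_i : ZMod m), V))
    (hT : ∀ v : ZMod m → V,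
      T (⨂ₜ[K] i, v i) = ⨂ₜ[K] i, f (i - 1) (v (i - 1))) :
    LinearMap.trace K (⨂[K] (_i : ZMod m), V) T =
      LinearMap.trace K V
        (((List.range m).reverse.map fun i => f (i : ZMod m)).prod) := by
  obtain ⟨n, rfl⟩ : ∃ n, m = n + 1 :=
    ⟨m - 1, (Nat.succ_pred_eq_of_pos (Nat.pos_of_ne_zero (NeZero.ne m))).symm⟩
  exact twisted_cyclic_aux n (Module.finBasis K V) f T hT
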